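/- Let p be a prime and t ≥ 0 a real number. If X ⊆ R^k is a finite Euclidean sub-p-toral set, then X × {0, t} ⊆ R^{k+1} is Euclidean sub-p-toral. -/

import Mathlib

/-- A finite set `X ⊆ ℝ^k` is *Euclidean sub-p-toral* if some isometric copy of `X`
in a possibly larger `ℝ^n` is contained in an orbit of a finite group of isometries
of `ℝ^n` isomorphic to `(ℤ/p)^α`. -/
def EuclideanSubPToral (p : ℕ) {k : ℕ} (X : Set (EuclideanSpace ℝ (Fin k))) : Prop :=
  ∃ n : ℕ, k ≤ n ∧
    ∃ ι : X → EuclideanSpace ℝ (Fin n),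
      (∀ x y : X, dist (ι x) (ι y) = dist (x : EuclideanSpace ℝ (Fin k)) y) ∧
      ∃ (G : Subgroup (EuclideanSpace ℝ (Fin n) ≃ᵢ EuclideanSpace ℝ (Fin n))) (α : ℕ),
        Nonempty (G ≃* Multiplicative (Fin α → ZMod p)) ∧
        ∃ v : EuclideanSpace ℝ (Fin n), ∀ x : X, ∃ g ∈ G,
          (g : EuclideanSpace ℝ (Fin n) ≃ᵢ EuclideanSpace ℝ (Fin n)) v = ι x

/-- The identification `ℝ^k × ℝ = ℝ^{k+1}`, appending a last coordinate. -/
noncomputable def snocPoint {k : ℕ} (x : EuclideanSpace ℝ (Fin k)) (s : ℝ) :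
    EuclideanSpace ℝ (Fin (k + 1)) :=
  (WithLp.equiv 2 (Fin (k + 1) → ℝ)).symm (Fin.snoc ((WithLp.equiv 2 (Fin k → ℝ)) x) s)


open Multiplicative

noncomputable section Aux

/-- Componentwise isometry of an `L²` product. -/
def prodIsoHom (A B : Type*) [SeminormedAddCommGroup A] [SeminormedAddCommGroup B] :
    (A ≃ᵢ A) × (B ≃ᵢ B) →* (WithLp 2 (A × B) ≃ᵢ WithLp 2 (A × B)) :=
  MonoidHom.mk' (fun fg =>
    { toEquiv := (WithLp.equiv 2 (A × B)).trans
        ((fg.1.toEquiv.prodCongr fg.2.toEquiv).trans (WithLp.equiv 2 (A × B)).symm)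
      isometry_toFun := Isometry.of_dist_eq fun x y => by
        rw [WithLp.prod_dist_eq_of_L2, WithLp.prod_dist_eq_of_L2]
        have h1 : dist (fg.1 x.fst) (fg.1 y.fst) = dist x.fst y.fst := fg.1.dist_eq _ _
        have h2 : dist (fg.2 x.snd) (fg.2 y.snd) = dist x.snd y.snd := fg.2.dist_eq _ _
        show Real.sqrt (dist (fg.1 x.fst) (fg.1 y.fst) ^ 2 + dist (fg.2 x.snd) (fg.2 y.snd) ^ 2)
            = Real.sqrt (dist x.fst y.fst ^ 2 + dist x.snd y.snd ^ 2)
        rw [h1, h2] })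
    (fun a b => by ext x; rfl)

lemma prodIsoHom_apply {A B : Type*} [SeminormedAddCommGroup A] [SeminormedAddCommGroup B]
    (f : A ≃ᵢ A) (g : B ≃ᵢ B) (x : WithLp 2 (A × B)) :
    prodIsoHom A B (f, g) x = (WithLp.equiv 2 (A × B)).symm (f x.fst, g x.snd) := rfl

/-- Rotations as isometries of `ℂ`. -/
def rotIsoHom : Circle →* (ℂ ≃ᵢ ℂ) :=
  MonoidHom.mk' (fun c => (rotation c).toIsometryEquiv)
    (fun a b => by ext z; simp [rotation_apply, mul_assoc])

lemma rotIsoHom_apply (c : Circle) (z : ℂ) : rotIsoHom c z = (c : ℂ) * z := rfl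

/-- Powers of an element of order dividing `p`, as a hom on `ZMod p`. -/
def zmodPowHom (p : ℕ) [NeZero p] {M : Type*} [Monoid M] (ζ : M) (hζ : ζ ^ p = 1) :
    Multiplicative (ZMod p) →* M where
  toFun a := ζ ^ (toAdd a).val
  map_one' := by simp
  map_mul' a b := by
    have hmod : ∀ m : ℕ, ζ ^ (m % p) = ζ ^ m := fun m => by
      conv_rhs => rw [← Nat.div_add_mod m p]
      rw [pow_add, pow_mul, hζ, one_pow, one_mul]
    show ζ ^ (toAdd a + toAdd b).val = ζ ^ (toAdd a).val * ζ ^ (toAdd b).val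
    rw [ZMod.val_add, hmod, pow_add]

lemma zmodPowHom_apply (p : ℕ) [NeZero p] {M : Type*} [Monoid M] (ζ : M) (hζ : ζ ^ p = 1)
    (a : Multiplicative (ZMod p)) : zmodPowHom p ζ hζ a = ζ ^ (toAdd a).val := rfl

/-- Conjugating isometries along an isometric equivalence. -/
def conjIsoHom {E F : Type*} [PseudoEMetricSpace E] [PseudoEMetricSpace F] (e : E ≃ᵢ F) :
    (E ≃ᵢ E) →* (F ≃ᵢ F) :=
  MonoidHom.mk' (fun g => (e.symm.trans g).trans e)
    (fun a b => by
      ext x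
      simp [IsometryEquiv.mul_apply, IsometryEquiv.trans_apply])

lemma conjIsoHom_apply {E F : Type*} [PseudoEMetricSpace E] [PseudoEMetricSpace F]
    (e : E ≃ᵢ F) (g : E ≃ᵢ E) (x : F) : conjIsoHom e g x = e (g (e.symm x)) := rfl

lemma conjIsoHom_injective {E F : Type*} [EMetricSpace E] [PseudoEMetricSpace F] (e : E ≃ᵢ F) :
    Function.Injective (conjIsoHom e) := by
  intro a b h
  ext x
  have := congrArg (fun g : F ≃ᵢ F => e.symm (g (e x))) h
  simpa [conjIsoHom_apply] using this

lemma circle_exp_nat_mul (x : ℝ) (m : ℕ) : Circle.exp (m * x) = Circle.exp x ^ m := by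
  induction m with
  | zero => simp
  | succ m ih => rw [Nat.cast_succ, add_mul, one_mul, Circle.exp_add, ih, pow_succ]

end Aux




lemma snocPoint_castSucc {k : ℕ} (x : EuclideanSpace ℝ (Fin k)) (s : ℝ) (i : Fin k) :
    snocPoint x s (Fin.castSucc i) = x i := by
  show (Fin.snoc ((WithLp.equiv 2 (Fin k → ℝ)) x) s : Fin (k+1) → ℝ) i.castSucc = x i
  exact Fin.snoc_castSucc _ _ _

lemma snocPoint_last {k : ℕ} (x : EuclideanSpace ℝ (Fin k)) (s : ℝ) :
    snocPoint x s (Fin.last k) = s := by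
  show (Fin.snoc ((WithLp.equiv 2 (Fin k → ℝ)) x) s : Fin (k+1) → ℝ) (Fin.last k) = s
  exact Fin.snoc_last _ _

lemma dist_snocPoint {k : ℕ} (x x' : EuclideanSpace ℝ (Fin k)) (s s' : ℝ) :
    dist (snocPoint x s) (snocPoint x' s') = Real.sqrt (dist x x' ^ 2 + dist s s' ^ 2) := by
  rw [EuclideanSpace.dist_eq, EuclideanSpace.dist_eq]
  rw [Fin.sum_univ_castSucc]
  congr 1
  rw [Real.sq_sqrt (by positivity)]
  congr 1
  · exact Finset.sum_congr rfl fun i _ => by rw [snocPoint_castSucc, snocPoint_castSucc]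
  · rw [snocPoint_last, snocPoint_last]

/-- **Lemma 6.** If `X ⊆ ℝ^k` is a finite Euclidean sub-p-toral set and `t ≥ 0`, then
`X × {0, t} ⊆ ℝ^{k+1}` is Euclidean sub-p-toral. -/
theorem euclideanSubPToral_prod_pair (p : ℕ) (hp : p.Prime) {k : ℕ} (t : ℝ) (ht : 0 ≤ t)
    (X : Set (EuclideanSpace ℝ (Fin k))) (hXfin : X.Finite)
    (hX : EuclideanSubPToral p X) :
    EuclideanSubPToral p {z : EuclideanSpace ℝ (Fin (k + 1)) |
      ∃ x ∈ X, ∃ s ∈ ({0, t} : Set ℝ), z = snocPoint x s} := by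
  classical
  obtain ⟨n, hkn, ι, hι, G, α, ⟨φ⟩, v, hv⟩ := hX
  haveI : NeZero p := ⟨hp.ne_zero⟩
  have hp1 : 1 < p := hp.one_lt
  -- the rotation of order p
  set ζ : Circle := Circle.exp (2 * Real.pi / p) with hζdef
  have hppos : (0:ℝ) < p := by exact_mod_cast hp.pos
  have hζpow : ∀ m : ℕ, ζ ^ m = Circle.exp (m * (2 * Real.pi / p)) := fun m =>
    (circle_exp_nat_mul _ m).symm
  have hζp : ζ ^ p = 1 := by
    rw [hζpow, mul_div_cancel₀ _ hppos.ne', Circle.exp_two_pi]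
  have hζdvd : ∀ m : ℕ, ζ ^ m = 1 → p ∣ m := by
    intro m hm
    rw [hζpow, Circle.exp_eq_one] at hm
    obtain ⟨j, hj⟩ := hm
    have hpi : (0:ℝ) < 2 * Real.pi := by positivity
    have : (m : ℝ) = j * p := by
      field_simp at hj
      nlinarith [hj]
    have hmj : (p : ℤ) ∣ (m : ℤ) := ⟨j, by exact_mod_cast this.trans (mul_comm (j:ℝ) p)⟩
    exact_mod_cast hmj
  -- the ambient space
  haveI : FiniteDimensional ℝ (WithLp 2 ((EuclideanSpace ℝ (Fin n)) × ℂ)) :=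
    (WithLp.linearEquiv 2 ℝ ((EuclideanSpace ℝ (Fin n)) × ℂ)).symm.finiteDimensional
  have hrank : Module.finrank ℝ (WithLp 2 ((EuclideanSpace ℝ (Fin n)) × ℂ)) = n + 2 := by
    rw [(WithLp.linearEquiv 2 ℝ ((EuclideanSpace ℝ (Fin n)) × ℂ)).finrank_eq, Module.finrank_prod,
      finrank_euclideanSpace_fin, Complex.finrank_real_complex]
  set e : WithLp 2 ((EuclideanSpace ℝ (Fin n)) × ℂ) ≃ᵢ EuclideanSpace ℝ (Fin (n+2)) :=
    ((stdOrthonormalBasis ℝ (WithLp 2 ((EuclideanSpace ℝ (Fin n)) × ℂ))).repr.trans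
      (LinearIsometryEquiv.piLpCongrLeft 2 ℝ ℝ (finCongr hrank))).toIsometryEquiv with hedef
  -- the group homomorphism
  set resHom : Multiplicative (Fin (α+1) → ZMod p) →* Multiplicative (Fin α → ZMod p) :=
    MonoidHom.mk' (fun f => Multiplicative.ofAdd fun i => Multiplicative.toAdd f i.castSucc)
      (fun a b => rfl) with hresdef
  set lastHom : Multiplicative (Fin (α+1) → ZMod p) →* Multiplicative (ZMod p) :=
    MonoidHom.mk' (fun f => Multiplicative.ofAdd (Multiplicative.toAdd f (Fin.last α)))
      (fun a b => rfl) with hlastdef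
  set h1 : Multiplicative (Fin α → ZMod p) →* ((EuclideanSpace ℝ (Fin n)) ≃ᵢ (EuclideanSpace ℝ (Fin n))) := G.subtype.comp φ.symm.toMonoidHom
    with h1def
  set ψ : Multiplicative (Fin (α+1) → ZMod p) →* (WithLp 2 ((EuclideanSpace ℝ (Fin n)) × ℂ) ≃ᵢ WithLp 2 ((EuclideanSpace ℝ (Fin n)) × ℂ)) :=
    (prodIsoHom (EuclideanSpace ℝ (Fin n)) ℂ).comp ((h1.comp resHom).prod
      ((rotIsoHom.comp (zmodPowHom p ζ hζp)).comp lastHom)) with hψdef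
  have hψapp : ∀ f x, ψ f x = (WithLp.equiv 2 ((EuclideanSpace ℝ (Fin n)) × ℂ)).symm
      (h1 (resHom f) x.fst, rotIsoHom (zmodPowHom p ζ hζp (lastHom f)) x.snd) :=
    fun f x => rfl
  set ψ' := (conjIsoHom e).comp ψ with hψ'def
  have hψinj : Function.Injective ψ := by
    rw [injective_iff_map_eq_one]
    intro f hf
    have h1eq : ∀ a : (EuclideanSpace ℝ (Fin n)), h1 (resHom f) a = a := by
      intro a
      have := congrArg (fun g : WithLp 2 ((EuclideanSpace ℝ (Fin n)) × ℂ) ≃ᵢ WithLp 2 ((EuclideanSpace ℝ (Fin n)) × ℂ) =>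
        (g ((WithLp.equiv 2 ((EuclideanSpace ℝ (Fin n)) × ℂ)).symm (a, 0))).fst) hf
      simpa [hψapp] using this
    have h2eq : ∀ c : ℂ, rotIsoHom (zmodPowHom p ζ hζp (lastHom f)) c = c := by
      intro c
      have := congrArg (fun g : WithLp 2 ((EuclideanSpace ℝ (Fin n)) × ℂ) ≃ᵢ WithLp 2 ((EuclideanSpace ℝ (Fin n)) × ℂ) =>
        (g ((WithLp.equiv 2 ((EuclideanSpace ℝ (Fin n)) × ℂ)).symm (0, c))).snd) hf
      simpa [hψapp] using this
    have hres1 : resHom f = 1 := by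
      have : h1 (resHom f) = 1 := IsometryEquiv.ext h1eq
      have hG : φ.symm (resHom f) = 1 := by
        apply Subtype.ext
        simpa [h1def] using this
      have := congrArg φ hG
      simpa using this
    have hlast1 : Multiplicative.toAdd f (Fin.last α) = 0 := by
      have hrot : rotation (zmodPowHom p ζ hζp (lastHom f)) = rotation 1 := by
        apply LinearIsometryEquiv.toIsometryEquiv_injective
        refine IsometryEquiv.ext fun c => ?_
        simpa [rotIsoHom_apply] using h2eq c
      have hone : zmodPowHom p ζ hζp (lastHom f) = 1 := rotation_injective hrot
      rw [zmodPowHom_apply] at hone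
      have hdvd := hζdvd _ hone
      have hlt : (Multiplicative.toAdd (lastHom f)).val < p := ZMod.val_lt _
      have hval0 : (Multiplicative.toAdd (lastHom f)).val = 0 := by
        rcases hdvd with ⟨c, hc⟩
        rcases Nat.eq_zero_or_pos c with rfl | hcpos
        · omega
        · nlinarith
      have := (ZMod.val_eq_zero _).mp hval0
      simpa [hlastdef] using this
    have : Multiplicative.toAdd f = 0 := by
      funext i
      refine Fin.lastCases ?_ ?_ i
      · simpa using hlast1
      · intro j
        have := congrFun (congrArg Multiplicative.toAdd hres1) j
        simpa [hresdef] using this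
    calc f = Multiplicative.ofAdd (Multiplicative.toAdd f) := rfl
    _ = Multiplicative.ofAdd 0 := by rw [this]
    _ = 1 := rfl
  have hψ'inj : Function.Injective ψ' := fun a b h =>
    hψinj (conjIsoHom_injective e (by simpa [hψ'def] using h))
  -- geometry of the two-point configuration in ℂ
  have hζne : (ζ : ℂ) ≠ 1 := by
    intro hcon
    have : ζ ^ 1 = 1 := by
      ext
      simpa using hcon
    have h1' := Nat.dvd_one.mp (hζdvd 1 this)
    omega
  have hnorm : ‖(ζ:ℂ) - 1‖ ≠ 0 := by
    simpa [sub_eq_zero] using hζne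
  set w : ℂ := ((t / ‖(ζ:ℂ) - 1‖ : ℝ) : ℂ) with hwdef
  have hdistw : dist w ((ζ:ℂ) * w) = t := by
    rw [dist_eq_norm]
    have : w - (ζ:ℂ) * w = (1 - (ζ:ℂ)) * w := by ring
    rw [this, norm_mul, hwdef, Complex.norm_real, norm_sub_rev]
    rw [Real.norm_eq_abs, abs_of_nonneg (div_nonneg ht (norm_nonneg _))]
    rw [mul_comm, div_mul_cancel₀ _ hnorm]
  set cc : ℝ → ℂ := fun s => if s = 0 then w else (ζ:ℂ) * w with hccdef
  have hcc : ∀ s ∈ ({0, t} : Set ℝ), ∀ s' ∈ ({0, t} : Set ℝ),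
      dist (cc s) (cc s') = dist s s' := by
    have hsymm : dist (cc 0) (cc t) = dist (0:ℝ) t := by
      by_cases ht0 : t = 0
      · simp [hccdef, ht0]
      · simp only [hccdef, if_pos rfl, if_neg ht0]
        rw [hdistw, Real.dist_eq]
        rw [abs_of_nonpos (by linarith)]
        ring
    rintro s (rfl | rfl) s' (rfl | rfl)
    · simp
    · exact hsymm
    · rw [dist_comm, dist_comm (α := ℝ)]; exact hsymm
    · simp
  haveI : Fact (1 < p) := ⟨hp1⟩
  set XP := {z : EuclideanSpace ℝ (Fin (k + 1)) | ∃ x ∈ X, ∃ s ∈ ({0, t} : Set ℝ),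
    z = snocPoint x s} with hXP
  have hdec : ∀ z : XP,
      ((WithLp.equiv 2 (Fin k → ℝ)).symm
        (fun i => (z : EuclideanSpace ℝ (Fin (k+1))) i.castSucc) : EuclideanSpace ℝ (Fin k)) ∈ X ∧
      (z : EuclideanSpace ℝ (Fin (k+1))) (Fin.last k) ∈ ({0, t} : Set ℝ) ∧
      (z : EuclideanSpace ℝ (Fin (k+1))) = snocPoint
        ((WithLp.equiv 2 (Fin k → ℝ)).symm
          fun i => (z : EuclideanSpace ℝ (Fin (k+1))) i.castSucc)
        ((z : EuclideanSpace ℝ (Fin (k+1))) (Fin.last k)) := by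
    rintro ⟨z, hz⟩
    obtain ⟨x, hx, s, hs, rfl⟩ := hz
    have hxe : ((WithLp.equiv 2 (Fin k → ℝ)).symm fun i => snocPoint x s i.castSucc) = x := by
      have hfun : (fun i => snocPoint x s i.castSucc) = (WithLp.equiv 2 (Fin k → ℝ)) x :=
        funext fun i => snocPoint_castSucc x s i
      rw [hfun]
      exact (WithLp.equiv 2 (Fin k → ℝ)).symm_apply_apply x
    have hse : snocPoint x s (Fin.last k) = s := snocPoint_last x s
    refine ⟨?_, ?_, ?_⟩
    · show ((WithLp.equiv 2 (Fin k → ℝ)).symm fun i => snocPoint x s i.castSucc) ∈ X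
      rw [hxe]; exact hx
    · show snocPoint x s (Fin.last k) ∈ ({0, t} : Set ℝ)
      rw [hse]; exact hs
    · show snocPoint x s = snocPoint
        ((WithLp.equiv 2 (Fin k → ℝ)).symm fun i => snocPoint x s i.castSucc)
        (snocPoint x s (Fin.last k))
      rw [hxe, hse]
  set ι' : XP → EuclideanSpace ℝ (Fin (n+2)) := fun z =>
    e ((WithLp.equiv 2 ((EuclideanSpace ℝ (Fin n)) × ℂ)).symm
      (ι ⟨_, (hdec z).1⟩, cc ((z : EuclideanSpace ℝ (Fin (k+1))) (Fin.last k)))) with hι'def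
  have hpairdist : ∀ (a a' : EuclideanSpace ℝ (Fin n)) (c c' : ℂ),
      dist ((WithLp.equiv 2 ((EuclideanSpace ℝ (Fin n)) × ℂ)).symm (a, c))
        ((WithLp.equiv 2 ((EuclideanSpace ℝ (Fin n)) × ℂ)).symm (a', c'))
        = Real.sqrt (dist a a' ^ 2 + dist c c' ^ 2) := by
    intro a a' c c'
    rw [WithLp.prod_dist_eq_of_L2]
    rfl
  refine ⟨n + 2, by omega, ι', ?_, ψ'.range, α + 1, ⟨(MonoidHom.ofInjective hψ'inj).symm⟩,
    e ((WithLp.equiv 2 ((EuclideanSpace ℝ (Fin n)) × ℂ)).symm (v, w)), ?_⟩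
  · intro z z'
    obtain ⟨hx1, hs1, hz1⟩ := hdec z
    obtain ⟨hx2, hs2, hz2⟩ := hdec z'
    rw [hι'def]
    dsimp only
    rw [e.dist_eq, hpairdist, hι, hcc _ hs1 _ hs2]
    conv_rhs => rw [hz1, hz2]
    rw [dist_snocPoint]
  · intro z
    obtain ⟨hx1, hs1, hz1⟩ := hdec z
    obtain ⟨g₀, hg₀, hg₀v⟩ := hv ⟨_, hx1⟩
    set b : ZMod p := if (z : EuclideanSpace ℝ (Fin (k+1))) (Fin.last k) = 0 then 0 else 1
      with hbdef
    set f : Multiplicative (Fin (α+1) → ZMod p) :=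
      Multiplicative.ofAdd (Fin.snoc (Multiplicative.toAdd (φ ⟨g₀, hg₀⟩)) b) with hfdef
    refine ⟨ψ' f, ⟨f, rfl⟩, ?_⟩
    show (conjIsoHom e) (ψ f) _ = ι' z
    rw [conjIsoHom_apply, e.symm_apply_apply, hι'def]
    dsimp only
    congr 1
    rw [hψapp]
    apply congrArg
    have hres : resHom f = φ ⟨g₀, hg₀⟩ := by
      show Multiplicative.ofAdd (fun i : Fin α => Multiplicative.toAdd f (Fin.castSucc i))
          = φ ⟨g₀, hg₀⟩
      have hfun : (fun i : Fin α => Multiplicative.toAdd f (Fin.castSucc i))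
          = Multiplicative.toAdd (φ ⟨g₀, hg₀⟩) :=
        funext fun i => by rw [hfdef, toAdd_ofAdd]; exact Fin.snoc_castSucc _ _ i
      rw [hfun]
      rfl
    have hlast : Multiplicative.toAdd (lastHom f) = b := by
      show Multiplicative.toAdd f (Fin.last α) = b
      rw [hfdef, toAdd_ofAdd]; exact Fin.snoc_last _ _
    have hfst : h1 (resHom f) v = ι ⟨_, hx1⟩ := by
      rw [hres]
      show (G.subtype (φ.symm (φ ⟨g₀, hg₀⟩))) v = _
      rw [φ.symm_apply_apply]
      exact hg₀v
    have hsnd : rotIsoHom (zmodPowHom p ζ hζp (lastHom f)) w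
        = cc ((z : EuclideanSpace ℝ (Fin (k+1))) (Fin.last k)) := by
      rw [zmodPowHom_apply, hlast, hbdef]
      by_cases h0 : (z : EuclideanSpace ℝ (Fin (k+1))) (Fin.last k) = 0
      · simp only [hccdef, h0, if_pos, ite_true, ZMod.val_zero, pow_zero, map_one]
        rfl
      · simp only [hccdef, if_neg h0, ZMod.val_one, pow_one, rotIsoHom_apply]
    exact Prod.ext hfst hsnd
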